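/- Let n ≥ 3 and let P(a⃗|x⃗) = Q(a⃗_g|x⃗_g)·R(a⃗_ḡ|x⃗_ḡ) be a product distribution across a bipartition {g, ḡ} of the n parties into nonempty groups, where Q and R are arbitrary (no-signalling) probability distributions on their groups. If parties i ∈ g and j ∈ ḡ lie in different groups, then the lifted CHSH-variant I^{ij}_{0⃗|0⃗}(P) = P(0ᵢ0ⱼ0⃗|0ᵢ0ⱼ0⃗) − P(1ᵢ0ⱼ0⃗|1ᵢ0ⱼ0⃗) − P(0ᵢ1ⱼ0⃗|0ᵢ1ⱼ0⃗) − P(0ᵢ0ⱼ0⃗|1ᵢ1ⱼ0⃗) satisfies I^{ij}_{0⃗|0⃗}(P) ≤ 0. -/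

import Mathlib

open Finset

noncomputable section

/-- `Q` depends only on the outcomes and inputs of the parties in `S`. -/
def DepOn {n : ℕ} (S : Finset (Fin n))
    (Q : (Fin n → Fin 2) → (Fin n → Fin 2) → ℝ) : Prop :=
  ∀ a a' x x' : Fin n → Fin 2, (∀ k ∈ S, a k = a' k) → (∀ k ∈ S, x k = x' k) →
    Q a x = Q a' x'

/-- `Q` is a probability distribution on the group `S` of parties (represented as a
function of all `n` coordinates that depends only on those in `S`; summing over all
outcome strings then gives `2^(n−|S|)`). -/
def IsDistOn {n : ℕ} (S : Finset (Fin n))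
    (Q : (Fin n → Fin 2) → (Fin n → Fin 2) → ℝ) : Prop :=
  (∀ a x, 0 ≤ Q a x) ∧ (∀ x, ∑ a, Q a x = 2 ^ (n - S.card)) ∧ DepOn S Q

/-- `Q` is no-signalling: for each party `k`, the marginal over `a k` does not depend on
the input `x k`. -/
def IsNS {n : ℕ} (Q : (Fin n → Fin 2) → (Fin n → Fin 2) → ℝ) : Prop :=
  ∀ (k : Fin n) (a x x' : Fin n → Fin 2), (∀ l, l ≠ k → x l = x' l) →
    ∑ v, Q (Function.update a k v) x = ∑ v, Q (Function.update a k v) x'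

/-- The all-zero outcome/input string. -/
def zvec (n : ℕ) : Fin n → Fin 2 := fun _ => 0

/-- The string which is zero except at positions `i` (value `u`) and `j` (value `v`). -/
def upd2 (n : ℕ) (i j : Fin n) (u v : Fin 2) : Fin n → Fin 2 :=
  Function.update (Function.update (zvec n) i u) j v

/-- The lifted CHSH-variant `I^{ij}_{0⃗|0⃗}` on parties `i, j`. -/
def liftedCHSH (n : ℕ) (P : (Fin n → Fin 2) → (Fin n → Fin 2) → ℝ) (i j : Fin n) : ℝ :=
  P (upd2 n i j 0 0) (upd2 n i j 0 0) - P (upd2 n i j 1 0) (upd2 n i j 1 0)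
    - P (upd2 n i j 0 1) (upd2 n i j 0 1) - P (upd2 n i j 0 0) (upd2 n i j 1 1)

theorem key_ineq (A B C D a b c d : ℝ) (hA:0≤A)(hB:0≤B)(hC:0≤C)(hD:0≤D)
  (ha:0≤a)(hb:0≤b)(hc:0≤c)(hd:0≤d) (h1 : A+B=C+D) (h2 : a+b=c+d) :
    A*a - D*a - A*d - C*c ≤ 0 := by
  rcases le_total C B with h | h
  · nlinarith [mul_nonneg (sub_nonneg.2 h) ha, mul_nonneg hA hd, mul_nonneg hC hc]
  · nlinarith [mul_nonneg (sub_nonneg.2 h) hb, mul_nonneg hB hc, mul_nonneg hD hd]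

/-- if `P = Q·R` is a product across the bipartition `{g, gᶜ}` with
no-signalling factors, and parties `i ∈ g`, `j ∉ g` lie in different groups, then the
lifted CHSH-variant satisfies `I^{ij}_{0⃗|0⃗}(P) ≤ 0`. -/
theorem stmt13 (n : ℕ) (hn : 3 ≤ n) (g : Finset (Fin n)) (i j : Fin n)
    (hi : i ∈ g) (hj : j ∉ g)
    (Q R P : (Fin n → Fin 2) → (Fin n → Fin 2) → ℝ)
    (hQ : IsDistOn g Q) (hQNS : IsNS Q)
    (hR : IsDistOn gᶜ R) (hRNS : IsNS R)
    (hP : ∀ a x, P a x = Q a x * R a x) :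
    liftedCHSH n P i j ≤ 0 := by
  have hij : i ≠ j := fun h => hj (h ▸ hi)
  have hji : j ≠ i := hij.symm
  -- coordinate lemmas
  have hupd_i : ∀ u w v : Fin 2, Function.update (upd2 n i j u w) i v = upd2 n i j v w := by
    intro u w v
    funext k
    by_cases hk : k = i
    · subst hk; simp [upd2, Function.update, hij]
    · by_cases hk2 : k = j <;> simp [upd2, Function.update, hk, hk2, hji]
  have hupd_j : ∀ u w v : Fin 2, Function.update (upd2 n i j u w) j v = upd2 n i j u v := by
    intro u w v
    funext k
    by_cases hk : k = j <;> simp [upd2, Function.update, hk]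
  -- Q only sees the i-components, R only sees the j-components
  have hQdep : ∀ u u' w w' w2 w2' : Fin 2,
      Q (upd2 n i j u w) (upd2 n i j u' w') = Q (upd2 n i j u w2) (upd2 n i j u' w2') := by
    intro u u' w w' w2 w2'
    refine hQ.2.2 _ _ _ _ ?_ ?_ <;> intro k hk <;>
    · have hkj : k ≠ j := fun h => hj (h ▸ hk)
      simp [upd2, Function.update_of_ne hkj]
  have hRdep : ∀ u u' w w' u2 u2' : Fin 2,
      R (upd2 n i j u w) (upd2 n i j u' w') = R (upd2 n i j u2 w) (upd2 n i j u2' w') := by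
    intro u u' w w' u2 u2'
    refine hR.2.2 _ _ _ _ ?_ ?_ <;> intro k hk <;>
    · have hki : k ≠ i := fun h => (Finset.mem_compl.mp hk) (h ▸ hi)
      by_cases hkj : k = j <;> simp [upd2, Function.update, hkj, hki]
  -- the four values of each factor
  set A := Q (upd2 n i j 0 0) (upd2 n i j 0 0) with hAdef
  set B := Q (upd2 n i j 1 0) (upd2 n i j 0 0) with hBdef
  set C := Q (upd2 n i j 0 0) (upd2 n i j 1 0) with hCdef
  set D := Q (upd2 n i j 1 0) (upd2 n i j 1 0) with hDdef
  set a := R (upd2 n i j 0 0) (upd2 n i j 0 0) with hadef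
  set b := R (upd2 n i j 0 1) (upd2 n i j 0 0) with hbdef
  set c := R (upd2 n i j 0 0) (upd2 n i j 0 1) with hcdef
  set d := R (upd2 n i j 0 1) (upd2 n i j 0 1) with hddef
  -- no-signalling constraints
  have hQns : A + B = C + D := by
    have := hQNS i (upd2 n i j 0 0) (upd2 n i j 0 0) (upd2 n i j 1 0)
      (by intro l hl; simp [upd2, Function.update, hl])
    simpa [Fin.sum_univ_two, hupd_i] using this
  have hRns : a + b = c + d := by
    have := hRNS j (upd2 n i j 0 0) (upd2 n i j 0 0) (upd2 n i j 0 1)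
      (by intro l hl; simp [upd2, Function.update, hl])
    simpa [Fin.sum_univ_two, hupd_j] using this
  -- rewrite the goal
  have e2 : Q (upd2 n i j 1 0) (upd2 n i j 1 0) * R (upd2 n i j 1 0) (upd2 n i j 1 0)
      = D * a := by rw [hRdep 1 1 0 0 0 0]
  have e3 : Q (upd2 n i j 0 1) (upd2 n i j 0 1) * R (upd2 n i j 0 1) (upd2 n i j 0 1)
      = A * d := by rw [hQdep 0 0 1 1 0 0]
  have e4 : Q (upd2 n i j 0 0) (upd2 n i j 1 1) * R (upd2 n i j 0 0) (upd2 n i j 1 1)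
      = C * c := by rw [hQdep 0 1 0 1 0 0, hRdep 0 1 0 1 0 0]
  have hgoal : liftedCHSH n P i j = A * a - D * a - A * d - C * c := by
    simp only [liftedCHSH, hP, e2, e3, e4]
    rfl
  rw [hgoal]
  exact key_ineq A B C D a b c d (hQ.1 _ _) (hQ.1 _ _) (hQ.1 _ _) (hQ.1 _ _)
    (hR.1 _ _) (hR.1 _ _) (hR.1 _ _) (hR.1 _ _) hQns hRns

end
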